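/- Let F_n(x) = Σ_{j=0}^n 2^{-αj} φ(2^j x). Then F_n is affine on each dyadic interval [k/2^{n+1}, (k+1)/2^{n+1}], and its slope on (k/2^{n+1}, (k+1)/2^{n+1}) equals C_n = Σ_{j=0}^n (-1)^{i_{j+1}} 2^{(1-α)j}, where i_1,...,i_{n+1} are the binary digits of k/2^{n+1} (i.e., k/2^{n+1} = Σ_{j=1}^{n+1} i_j 2^{-j}). -/

import Mathlib

open Real MeasureTheory Filter Topology

noncomputable def phi (x : ℝ) : ℝ := |x - round x|

noncomputable def Knopp (α : ℝ) (x : ℝ) : ℝ :=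
  ∑' j : ℕ, (2:ℝ) ^ (-(α * (j:ℝ))) * phi ((2:ℝ) ^ j * x)

noncomputable def KnoppN (α : ℝ) (n : ℕ) (x : ℝ) : ℝ :=
  ∑ j ∈ Finset.range (n+1), (2:ℝ) ^ (-(α * (j:ℝ))) * phi ((2:ℝ) ^ j * x)

noncomputable def digit (x : ℝ) (j : ℕ) : ℕ := (⌊(2:ℝ) ^ j * x⌋).toNat % 2

noncomputable def knoppSlope (α x : ℝ) (n : ℕ) : ℝ :=
  ∑ j ∈ Finset.range n, (-1:ℝ) ^ (digit x (j+1)) * (2:ℝ) ^ ((1-α) * (j:ℝ))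

lemma phi_eq_left (p : ℤ) (t : ℝ) (h1 : (p:ℝ) ≤ t) (h2 : t ≤ (p:ℝ) + 1/2) :
    phi t = t - p := by
  unfold phi
  rcases eq_or_lt_of_le h2 with h | h
  · have hr : round t = p + 1 := by
      rw [round_eq, h]
      have : (p:ℝ) + 1/2 + 1/2 = ((p+1 : ℤ):ℝ) := by push_cast; ring
      rw [this, Int.floor_intCast]
    rw [hr]; push_cast
    rw [abs_of_nonpos (by linarith)]; linarith
  · have hr : round t = p := by
      rw [round_eq]
      apply Int.floor_eq_iff.mpr
      constructor <;> push_cast <;> linarith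
    rw [hr, abs_of_nonneg (by linarith)]

lemma phi_eq_right (p : ℤ) (t : ℝ) (h1 : (p:ℝ) + 1/2 ≤ t) (h2 : t ≤ (p:ℝ) + 1) :
    phi t = (p:ℝ) + 1 - t := by
  unfold phi
  have hr : round t = p + 1 := by
    rw [round_eq]
    apply Int.floor_eq_iff.mpr
    constructor <;> push_cast <;> linarith
  rw [hr]; push_cast; rw [abs_of_nonpos (by linarith)]; ring

lemma floor_nat_div (a b : ℕ) : ⌊(a:ℝ) / (b:ℝ)⌋.toNat = a / b := by
  rw [Int.floor_toNat, Nat.floor_div_eq_div]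

lemma digit_eq (n k j : ℕ) (hj : j ≤ n) :
    digit ((k:ℝ)/2^(n+1)) (j+1) = (k / 2^(n-j)) % 2 := by
  unfold digit
  have he : (2:ℝ)^(j+1) * ((k:ℝ)/2^(n+1)) = (k:ℝ) / ((2^(n-j) : ℕ):ℝ) := by
    have h2 : ((2:ℝ))^(j+1) * (2:ℝ)^(n-j) = 2^(n+1) := by
      rw [← pow_add]; congr 1; omega
    push_cast
    field_simp
    nlinarith [h2]
  rw [he, floor_nat_div]

lemma phi_diff_key (n k j : ℕ) (hj : j ≤ n) (hk : k < 2^(n+1)) (u v : ℝ)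
    (hu1 : (k:ℝ)/2^(n+1-j) ≤ u) (hu2 : u ≤ ((k:ℝ)+1)/2^(n+1-j))
    (hv1 : (k:ℝ)/2^(n+1-j) ≤ v) (hv2 : v ≤ ((k:ℝ)+1)/2^(n+1-j)) :
    phi u - phi v = (-1:ℝ)^((k / 2^(n-j)) % 2) * (u - v) := by
  set m := n - j with hm
  have hm1 : n + 1 - j = m + 1 := by omega
  rw [hm1] at hu1 hu2 hv1 hv2
  set q := k / 2^m with hq
  have hdm : 2^m * q + k % 2^m = k := Nat.div_add_mod k (2^m)
  have hr : k % 2^m < 2^m := Nat.mod_lt _ (by positivity)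
  -- real bounds: q/2 ≤ u,v ≤ (q+1)/2
  have hpow : (0:ℝ) < 2^(m+1) := by positivity
  have hkl : (q:ℝ)/2 ≤ (k:ℝ)/2^(m+1) := by
    rw [div_le_div_iff₀ (by norm_num) hpow]
    have : ((2^m * q : ℕ):ℝ) ≤ (k:ℝ) := by exact_mod_cast Nat.le.intro hdm
    push_cast at this ⊢
    ring_nf
    ring_nf at this
    nlinarith [this]
  have hku : ((k:ℝ)+1)/2^(m+1) ≤ ((q:ℝ)+1)/2 := by
    rw [div_le_div_iff₀ hpow (by norm_num)]
    have : (k:ℝ) + 1 ≤ ((2^m * q + 2^m : ℕ):ℝ) := by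
      have : k + 1 ≤ 2^m * q + 2^m := by omega
      exact_mod_cast this
    have hps : (2:ℝ)^(m+1) = 2^m * 2 := pow_succ 2 m
    have hpm : (0:ℝ) < 2^m := by positivity
    push_cast at this ⊢
    nlinarith [this, hps, hpm]
  have hu1' : (q:ℝ)/2 ≤ u := le_trans hkl hu1
  have hu2' : u ≤ ((q:ℝ)+1)/2 := le_trans hu2 hku
  have hv1' : (q:ℝ)/2 ≤ v := le_trans hkl hv1
  have hv2' : v ≤ ((q:ℝ)+1)/2 := le_trans hv2 hku
  rcases Nat.even_or_odd q with ⟨p, hp⟩ | ⟨p, hp⟩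
  · have hq2 : q % 2 = 0 := by omega
    have hqr : (q:ℝ) = 2*(p:ℝ) := by rw [hp]; push_cast; ring
    rw [hqr] at hu1' hu2' hv1' hv2'
    rw [hq2, pow_zero, one_mul]
    have hb1 : ((p:ℤ):ℝ) ≤ u := by push_cast; linarith
    have hb2 : u ≤ ((p:ℤ):ℝ) + 1/2 := by push_cast; linarith
    have hc1 : ((p:ℤ):ℝ) ≤ v := by push_cast; linarith
    have hc2 : v ≤ ((p:ℤ):ℝ) + 1/2 := by push_cast; linarith
    rw [phi_eq_left p u hb1 hb2, phi_eq_left p v hc1 hc2]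
    ring
  · have hq2 : q % 2 = 1 := by omega
    have hqr : (q:ℝ) = 2*(p:ℝ) + 1 := by rw [hp]; push_cast; ring
    rw [hqr] at hu1' hu2' hv1' hv2'
    rw [hq2, pow_one]
    have hb1 : ((p:ℤ):ℝ) + 1/2 ≤ u := by push_cast; linarith
    have hb2 : u ≤ ((p:ℤ):ℝ) + 1 := by push_cast; linarith
    have hc1 : ((p:ℤ):ℝ) + 1/2 ≤ v := by push_cast; linarith
    have hc2 : v ≤ ((p:ℤ):ℝ) + 1 := by push_cast; linarith
    rw [phi_eq_right p u hb1 hb2, phi_eq_right p v hc1 hc2]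
    ring

theorem knoppN_affine_slope (α : ℝ) (hα : 0 < α) (hα1 : α < 1) (n k : ℕ)
    (hk : k < 2 ^ (n+1)) :
    ∀ x ∈ Set.Icc ((k:ℝ)/2^(n+1)) (((k:ℝ)+1)/2^(n+1)),
    ∀ y ∈ Set.Icc ((k:ℝ)/2^(n+1)) (((k:ℝ)+1)/2^(n+1)),
      KnoppN α n x - KnoppN α n y = knoppSlope α ((k:ℝ)/2^(n+1)) (n+1) * (x - y) := by
  intro x hx y hy
  unfold KnoppN knoppSlope
  rw [← Finset.sum_sub_distrib, Finset.sum_mul]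
  refine Finset.sum_congr rfl fun j hj => ?_
  have hjn : j ≤ n := Nat.lt_succ_iff.mp (Finset.mem_range.mp hj)
  rw [← mul_sub]
  -- scale bounds
  have hsc : (2:ℝ)^j / 2^(n+1) = 1 / 2^(n+1-j) := by
    rw [div_eq_div_iff (by positivity) (by positivity), one_mul, ← pow_add]
    congr 1; omega
  have hpj : (0:ℝ) < (2:ℝ)^j := by positivity
  obtain ⟨hx1, hx2⟩ := hx
  obtain ⟨hy1, hy2⟩ := hy
  have hb : ∀ z : ℝ, (k:ℝ)/2^(n+1) ≤ z → z ≤ ((k:ℝ)+1)/2^(n+1) →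
      (k:ℝ)/2^(n+1-j) ≤ (2:ℝ)^j * z ∧ (2:ℝ)^j * z ≤ ((k:ℝ)+1)/2^(n+1-j) := by
    intro z h1 h2
    constructor
    · calc (k:ℝ)/2^(n+1-j) = (2:ℝ)^j * ((k:ℝ)/2^(n+1)) := by
            rw [mul_div_assoc', mul_comm ((2:ℝ)^j), mul_div_assoc, hsc]; ring
        _ ≤ (2:ℝ)^j * z := by apply mul_le_mul_of_nonneg_left h1 (le_of_lt hpj)
    · calc (2:ℝ)^j * z ≤ (2:ℝ)^j * (((k:ℝ)+1)/2^(n+1)) :=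
            mul_le_mul_of_nonneg_left h2 (le_of_lt hpj)
        _ = ((k:ℝ)+1)/2^(n+1-j) := by
            rw [mul_div_assoc', mul_comm ((2:ℝ)^j), mul_div_assoc, hsc]; ring
  obtain ⟨hu1, hu2⟩ := hb x hx1 hx2
  obtain ⟨hv1, hv2⟩ := hb y hy1 hy2
  rw [phi_diff_key n k j hjn hk _ _ hu1 hu2 hv1 hv2, digit_eq n k j hjn]
  have hp : (2:ℝ)^(-(α*(j:ℝ))) * (2:ℝ)^(j:ℕ) = (2:ℝ)^((1-α)*(j:ℝ)) := by
    rw [← Real.rpow_natCast 2 j, ← Real.rpow_add (by norm_num)]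
    congr 1; ring
  rw [← hp]; ring
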